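/- Let M be a finite non-abelian simple group generated by elements g_1, …, g_n (n ≥ 1). Then there exists an index j ∈ {1, …, n} such that the centralizer of g_j in M satisfies |C_M(g_j)| ≤ |M|^{(n−1)/n}, and consequently the conjugacy class of g_j in M has size at least |M|^{1/n}. -/

import Mathlib

theorem exists_generator_with_small_centralizer
    (M : Type*) [Group M] [Finite M]
    (hs : IsSimpleGroup M) (hna : ∃ x y : M, x * y ≠ y * x)
    (n : ℕ) (hn : 1 ≤ n) (g : Fin n → M)
    (hg : Subgroup.closure (Set.range g) = ⊤) :
    ∃ j : Fin n,
      (Nat.card (Subgroup.centralizer {g j}) : ℝ)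
          ≤ (Nat.card M : ℝ) ^ (((n : ℝ) - 1) / n) ∧
      (Nat.card M : ℝ) ^ ((1 : ℝ) / n)
          ≤ (Nat.card {x : M | IsConj (g j) x} : ℝ) := by
  classical
  -- The center of a non-abelian simple group is trivial
  have hZ : Subgroup.center M = ⊥ := by
    rcases hs.eq_bot_or_eq_top_of_normal (Subgroup.center M) inferInstance with h | h
    · exact h
    · exfalso
      obtain ⟨x, y, hxy⟩ := hna
      have hx : x ∈ Subgroup.center M := h ▸ Subgroup.mem_top x
      exact hxy ((Subgroup.mem_center_iff.mp hx y).symm)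
  -- The intersection of the centralizers of the generators is the center
  have hinf : (⨅ j : Fin n, Subgroup.centralizer {g j}) = ⊥ := by
    rw [← hZ]
    apply le_antisymm
    · intro x hx
      rw [Subgroup.mem_iInf] at hx
      rw [Subgroup.mem_center_iff]
      intro y
      have hy : y ∈ Subgroup.centralizer {x} := by
        have : Subgroup.closure (Set.range g) ≤ Subgroup.centralizer {x} := by
          rw [Subgroup.closure_le]
          rintro - ⟨j, rfl⟩
          exact Subgroup.mem_centralizer_singleton_iff.mpr
            (Subgroup.mem_centralizer_singleton_iff.mp (hx j)).symm
        exact this (hg ▸ Subgroup.mem_top y)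
      exact (Subgroup.mem_centralizer_singleton_iff.mp hy)
    · intro x hx
      rw [Subgroup.mem_iInf]
      intro j
      exact Subgroup.mem_centralizer_singleton_iff.mpr
        (Subgroup.mem_center_iff.mp hx (g j)).symm
  -- hence |M| ≤ ∏ indices of the centralizers
  have hprod : Nat.card M ≤ ∏ j : Fin n, (Subgroup.centralizer {g j}).index := by
    calc Nat.card M = (⨅ j : Fin n, Subgroup.centralizer {g j}).index := by
          rw [hinf, Subgroup.index_bot]
      _ ≤ ∏ j : Fin n, (Subgroup.centralizer {g j}).index :=
          Subgroup.index_iInf_le _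
  -- pick j with maximal index
  have hne : (Finset.univ : Finset (Fin n)).Nonempty := by
    have : Nonempty (Fin n) := Fin.pos_iff_nonempty.mp hn
    exact Finset.univ_nonempty
  obtain ⟨j, -, hj⟩ := Finset.exists_max_image Finset.univ
    (fun j => (Subgroup.centralizer {g j}).index) hne
  refine ⟨j, ?_⟩
  set I := (Subgroup.centralizer {g j}).index with hI
  have hcardM : Nat.card M ≤ I ^ n := by
    calc Nat.card M ≤ ∏ i : Fin n, (Subgroup.centralizer {g i}).index := hprod
      _ ≤ ∏ _i : Fin n, I :=
          Finset.prod_le_prod (fun _ _ => Nat.zero_le _)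
            (fun i _ => hj i (Finset.mem_univ i))
      _ = I ^ n := by simp
  -- basic positivity facts
  have hM0 : 0 < Nat.card M := Nat.card_pos
  have hI0 : 0 < I := Nat.pos_of_ne_zero Subgroup.index_ne_zero_of_finite
  have hn0 : (n : ℝ) ≠ 0 := by positivity
  -- real form: |M|^(1/n) ≤ I
  have hkey : (Nat.card M : ℝ) ^ ((1 : ℝ) / n) ≤ (I : ℝ) := by
    have h1 : (Nat.card M : ℝ) ≤ (I : ℝ) ^ (n : ℕ) := by
      exact_mod_cast hcardM
    have h2 : ((Nat.card M : ℝ)) ^ ((1 : ℝ) / n)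
        ≤ ((I : ℝ) ^ (n : ℕ)) ^ ((1 : ℝ) / n) :=
      Real.rpow_le_rpow (by positivity) h1 (by positivity)
    calc (Nat.card M : ℝ) ^ ((1 : ℝ) / n)
        ≤ ((I : ℝ) ^ (n : ℕ)) ^ ((1 : ℝ) / n) := h2
      _ = (I : ℝ) ^ ((n : ℝ) * (1 / n)) := by
          rw [← Real.rpow_natCast (I : ℝ) n, ← Real.rpow_mul (by positivity)]
      _ = (I : ℝ) := by
          rw [mul_one_div, div_self hn0, Real.rpow_one]
  -- centralizer cardinality bound
  have hmul : (Nat.card (Subgroup.centralizer {g j}) : ℝ) * (I : ℝ)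
      = (Nat.card M : ℝ) := by
    exact_mod_cast congrArg (Nat.cast : ℕ → ℝ)
      (Subgroup.card_mul_index (Subgroup.centralizer {g j}))
  constructor
  · have hIpos : (0 : ℝ) < I := by exact_mod_cast hI0
    have hMpos : (0 : ℝ) < Nat.card M := by exact_mod_cast hM0
    have hc : (Nat.card (Subgroup.centralizer {g j}) : ℝ)
        = (Nat.card M : ℝ) / I := by
      field_simp [← hmul]
      linarith [hmul]
    rw [hc]
    have hrpow_pos : (0 : ℝ) < (Nat.card M : ℝ) ^ ((1 : ℝ) / n) :=
      Real.rpow_pos_of_pos hMpos _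
    calc (Nat.card M : ℝ) / I
        ≤ (Nat.card M : ℝ) / (Nat.card M : ℝ) ^ ((1 : ℝ) / n) :=
          div_le_div_of_nonneg_left hMpos.le hrpow_pos hkey
      _ = (Nat.card M : ℝ) ^ (((n : ℝ) - 1) / n) := by
          rw [div_eq_iff (ne_of_gt hrpow_pos), ← Real.rpow_add hMpos]
          rw [← add_div, sub_add_cancel, div_self hn0, Real.rpow_one]
  · -- conjugacy class size
    have horb : {x : M | IsConj (g j) x} = MulAction.orbit (ConjAct M) (g j) := by
      ext x
      rw [Set.mem_setOf_eq, ConjAct.mem_orbit_conjAct, isConj_comm]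
    have hcard : Nat.card {x : M | IsConj (g j) x} = I := by
      rw [horb, hI, Subgroup.centralizer_eq_comap_stabilizer]
      rw [Nat.card_coe_set_eq, ← MulAction.index_stabilizer]
      exact (Subgroup.index_comap_of_surjective _ ConjAct.toConjAct.surjective).symm
    rw [hcard]
    exact hkey
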